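/- arXiv:1807.10461 — 3 statements merged into one kernel-verified Lean document; each statement's English description precedes it below -/
import Mathlib

section
/- The chromatic number of the k-th power of the infinite square grid equals ⌈(k+1)^2/2⌉ for every k ≥ 1. -/
/-- The infinite square grid. -/
def squareGrid : SimpleGraph (ℤ × ℤ) where
  Adj u v := (u.1 - v.1).natAbs + (u.2 - v.2).natAbs = 1
  symm := ⟨by intro u v h; omega⟩
  loopless := ⟨by intro u h; omega⟩

/-- The `k`-th power of a graph. -/
def graphPow {V : Type*} (G : SimpleGraph V) (k : ℕ) : SimpleGraph V where
  Adj u v := u ≠ v ∧ G.dist u v ≤ k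
  symm := by
    constructor
    intro u v h
    exact ⟨h.1.symm, by rw [SimpleGraph.dist_comm]; exact h.2⟩
  loopless := ⟨by intro u h; exact h.1 rfl⟩



/-- ℓ1 distance -/
def d1 (u v : ℤ × ℤ) : ℕ := (u.1 - v.1).natAbs + (u.2 - v.2).natAbs

lemma exists_walk_d1 : ∀ (n : ℕ) (u v : ℤ × ℤ), d1 u v = n →
    ∃ w : squareGrid.Walk u v, w.length = n := by
  intro n
  induction n with
  | zero =>
    intro u v h
    have : u = v := by
      have : u.1 = v.1 ∧ u.2 = v.2 := by unfold d1 at h; omega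
      exact Prod.ext this.1 this.2
    subst this; exact ⟨SimpleGraph.Walk.nil, rfl⟩
  | succ n ih =>
    intro u v h
    by_cases h1 : u.1 ≠ v.1
    · set u' : ℤ × ℤ := (u.1 + (if u.1 < v.1 then 1 else -1), u.2) with hu'
      have hadj : squareGrid.Adj u u' := by
        show (u.1 - u'.1).natAbs + (u.2 - u'.2).natAbs = 1
        simp only [hu']
        split <;> simp
      have hd : d1 u' v = n := by
        unfold d1 at h ⊢; simp only [hu']; split <;> omega
      obtain ⟨w, hw⟩ := ih u' v hd
      exact ⟨SimpleGraph.Walk.cons hadj w, by simp [hw]⟩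
    · push_neg at h1
      set u' : ℤ × ℤ := (u.1, u.2 + (if u.2 < v.2 then 1 else -1)) with hu'
      have hadj : squareGrid.Adj u u' := by
        show (u.1 - u'.1).natAbs + (u.2 - u'.2).natAbs = 1
        simp only [hu']
        split <;> simp
      have hd : d1 u' v = n := by
        unfold d1 at h ⊢; simp only [hu']; split <;> omega
      obtain ⟨w, hw⟩ := ih u' v hd
      exact ⟨SimpleGraph.Walk.cons hadj w, by simp [hw]⟩

lemma d1_le_walk_length : ∀ {u v : ℤ × ℤ} (w : squareGrid.Walk u v), d1 u v ≤ w.length := by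
  intro u v w
  induction w with
  | nil => unfold d1; omega
  | @cons a b c hab w ih =>
    have : (a.1 - b.1).natAbs + (a.2 - b.2).natAbs = 1 := hab
    unfold d1 at ih ⊢
    simp only [SimpleGraph.Walk.length_cons]
    omega

lemma squareGrid_dist (u v : ℤ × ℤ) : squareGrid.dist u v = d1 u v := by
  obtain ⟨w, hw⟩ := exists_walk_d1 (d1 u v) u v rfl
  refine le_antisymm (hw ▸ SimpleGraph.dist_le w) ?_
  obtain ⟨p, hp⟩ := SimpleGraph.Reachable.exists_walk_length_eq_dist (⟨w⟩ : squareGrid.Reachable u v)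
  exact hp ▸ d1_le_walk_length p

-- even case helper: t = 1 case
lemma packE_one (R x y : ℤ) (hR : 0 ≤ R)
    (h1 : (2*R+1)*x + y = 2*R^2+2*R+1) (hxy : |x| + |y| ≤ 2*R) : False := by
  rcases le_or_gt x 0 with hx | hx
  · have hy : 0 < y := by nlinarith
    rw [abs_of_nonpos hx, abs_of_pos hy] at hxy
    nlinarith
  · rcases le_or_gt x R with hx2 | hx2
    · have hy : 0 < y := by nlinarith
      rw [abs_of_pos hx, abs_of_pos hy] at hxy
      nlinarith
    · have hy : y ≤ 0 := by nlinarith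
      rw [abs_of_pos hx, abs_of_nonpos hy] at hxy
      nlinarith

lemma packE (r : ℕ) (x y : ℤ)
    (hd : ((2*r^2+2*r+1 : ℕ) : ℤ) ∣ ((2*r+1)*x + y))
    (hxy : x.natAbs + y.natAbs ≤ 2*r) : x = 0 ∧ y = 0 := by
  obtain ⟨t, ht⟩ := hd
  set R : ℤ := (r : ℤ) with hR
  have hR0 : 0 ≤ R := Int.natCast_nonneg r
  have hcast : ((2*r^2+2*r+1 : ℕ) : ℤ) = 2*R^2+2*R+1 := by push_cast; ring
  rw [hcast] at ht
  have hxy' : |x| + |y| ≤ 2*R := by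
    rw [Int.abs_eq_natAbs, Int.abs_eq_natAbs]; omega
  have hb : |(2*R+1)*x + y| ≤ 4*R^2 + 2*R := by
    calc |(2*R+1)*x + y| ≤ |(2*R+1)*x| + |y| := abs_add_le _ _
    _ = (2*R+1)*|x| + |y| := by rw [abs_mul, abs_of_pos (by omega)]
    _ ≤ 4*R^2 + 2*R := by nlinarith [abs_nonneg x, abs_nonneg y]
  have hn : (0:ℤ) < 2*R^2+2*R+1 := by positivity
  have ht1 : |t| ≤ 1 := by
    by_contra hc
    push_neg at hc
    have : 2 ≤ |t| := by omega
    have : 2*(2*R^2+2*R+1) ≤ |(2*R+1)*x + y| := by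
      rw [ht, abs_mul, abs_of_pos hn]; nlinarith
    nlinarith
  obtain ⟨htl, htr⟩ := abs_le.mp ht1
  interval_cases t
  · exfalso
    exact packE_one R (-x) (-y) hR0 (by linarith) (by rw [abs_neg, abs_neg]; exact hxy')
  · simp at ht
    constructor
    · by_contra hx
      have : 1 ≤ |x| := by rcases abs_pos.mpr hx with h; omega
      have hy : y = -((2*R+1)*x) := by linarith
      have : |y| = (2*R+1)*|x| := by rw [hy, abs_neg, abs_mul, abs_of_pos (by omega)]
      nlinarith
    · by_contra hy
      have hx : x = 0 := by
        by_contra hx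
        have : 1 ≤ |x| := by rcases abs_pos.mpr hx with h; omega
        have hy' : y = -((2*R+1)*x) := by linarith
        have : |y| = (2*R+1)*|x| := by rw [hy', abs_neg, abs_mul, abs_of_pos (by omega)]
        nlinarith
      rw [hx] at ht; simp at ht; omega
  · exact absurd (packE_one R x y hR0 (by linarith) hxy') (fun h => h)

-- odd case
lemma packO (m : ℕ) (hm : 1 ≤ m) (a b : ℤ)
    (hd2 : ((2*m : ℕ) : ℤ) ∣ (a + b)) (hdm : ((m : ℕ) : ℤ) ∣ a)
    (hab : a.natAbs + b.natAbs ≤ 2*m - 1) : a = 0 ∧ b = 0 := by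
  obtain ⟨s, hs⟩ := hdm
  obtain ⟨t, ht⟩ := hd2
  set M : ℤ := (m : ℤ) with hM
  have hM1 : 1 ≤ M := by rw [hM]; exact_mod_cast hm
  have ht' : a + b = 2*M*t := by rw [ht, hM]; push_cast; ring
  have hab' : |a| + |b| ≤ 2*M - 1 := by
    rw [Int.abs_eq_natAbs, Int.abs_eq_natAbs, hM]; omega
  have hsb : |s| ≤ 1 := by
    rcases le_or_gt (|s|) 1 with h | h
    · exact h
    · exfalso
      have h2 : 2 ≤ |s| := h
      have hA : 2*M ≤ |a| := by
        rw [hs, abs_mul, abs_of_pos (by omega : (0:ℤ) < M)]; nlinarith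
      have hB := abs_nonneg b
      linarith
  obtain ⟨hsl, hsr⟩ := abs_le.mp hsb
  interval_cases s
  · exfalso
    have ha : |a| = M := by
      rw [hs, show M * (-1) = -M by ring, abs_neg, abs_of_pos (by omega)]
    have hb' : b = M * (2*t+1) := by linarith [ht', hs]
    have hbabs : |b| = M * |2*t+1| := by
      rw [hb', abs_mul, abs_of_pos (by omega : (0:ℤ) < M)]
    have h1 : 1 ≤ |2*t+1| := Int.one_le_abs (by omega)
    nlinarith
  · have ha : a = 0 := by rw [hs]; ring
    refine ⟨ha, ?_⟩
    rw [ha] at ht'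
    simp at ht'
    by_contra hb
    have h1 : 1 ≤ |t| := by
      rcases eq_or_ne t 0 with h | h
      · rw [h] at ht'; simp at ht'; exact absurd ht' hb
      · exact Int.one_le_abs h
    have hbabs : |b| = 2*M*|t| := by
      rw [ht', abs_mul, abs_of_pos (by omega : (0:ℤ) < 2*M)]
    have := abs_nonneg a
    nlinarith
  · exfalso
    have ha : |a| = M := by
      rw [hs, mul_one, abs_of_pos (by omega)]
    have hb' : b = M * (2*t-1) := by linarith [ht', hs]
    have hbabs : |b| = M * |2*t-1| := by
      rw [hb', abs_mul, abs_of_pos (by omega : (0:ℤ) < M)]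
    have h1 : 1 ≤ |2*t-1| := Int.one_le_abs (by omega)
    nlinarith

lemma Icc_int_succ (r : ℕ) :
    Finset.Icc (-((r:ℤ)+1)) ((r:ℤ)+1)
      = insert (-((r:ℤ)+1)) (insert ((r:ℤ)+1) (Finset.Icc (-(r:ℤ)) (r:ℤ))) := by
  ext i
  simp only [Finset.mem_Icc, Finset.mem_insert]
  omega

lemma sumS : ∀ r : ℕ, ∑ i ∈ Finset.Icc (-(r:ℤ)) (r:ℤ), (2*(r - i.natAbs)+1) = 2*r^2+2*r+1 := by
  intro r
  induction r with
  | zero => simp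
  | succ r ih =>
    have hcast : ((r:ℤ)+1) = ((r+1 : ℕ) : ℤ) := by push_cast; ring
    rw [← hcast, Icc_int_succ r]
    rw [Finset.sum_insert (by simp only [Finset.mem_insert, Finset.mem_Icc]; omega),
        Finset.sum_insert (by simp only [Finset.mem_Icc]; omega)]
    have hstep : ∑ i ∈ Finset.Icc (-(r:ℤ)) (r:ℤ), (2*((r+1) - i.natAbs)+1)
        = ∑ i ∈ Finset.Icc (-(r:ℤ)) (r:ℤ), ((2*(r - i.natAbs)+1) + 2) := by
      apply Finset.sum_congr rfl
      intro i hi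
      simp only [Finset.mem_Icc] at hi
      omega
    rw [hstep, Finset.sum_add_distrib, ih, Finset.sum_const, Int.card_Icc]
    have e3 : ((r:ℤ) + 1 - -(r:ℤ)).toNat = 2*r+1 := by omega
    have e1 : (-((r:ℤ)+1)).natAbs = r+1 := by omega
    have e2 : ((r:ℤ)+1).natAbs = r+1 := by omega
    rw [e1, e2, e3, Nat.sub_self]
    ring

/-- row of the even diamond -/
noncomputable def dRow (r : ℕ) (e : ℕ) (i : ℤ) : Finset (ℤ × ℤ) :=
  {i} ×ˢ Finset.Icc (-((r:ℤ) - i.natAbs)) ((r:ℤ) - i.natAbs + e)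

noncomputable def diamond (r : ℕ) (e : ℕ) : Finset (ℤ × ℤ) :=
  (Finset.Icc (-(r:ℤ)) (r:ℤ)).biUnion (dRow r e)

lemma mem_diamond {r e : ℕ} {p : ℤ × ℤ} :
    p ∈ diamond r e ↔ (p.1.natAbs : ℤ) ≤ r ∧
      -((r:ℤ) - p.1.natAbs) ≤ p.2 ∧ p.2 ≤ (r:ℤ) - p.1.natAbs + e := by
  simp only [diamond, dRow, Finset.mem_biUnion, Finset.mem_Icc, Finset.mem_product,
    Finset.mem_singleton]
  constructor
  · rintro ⟨i, hi, rfl, h2, h3⟩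
    omega
  · rintro ⟨h1, h2, h3⟩
    exact ⟨p.1, by omega, rfl, by omega, by omega⟩

lemma card_diamond (r e : ℕ) : (diamond r e).card = 2*r^2+2*r+1 + e*(2*r+1) := by
  rw [diamond, Finset.card_biUnion]
  · have hrow : ∀ i ∈ Finset.Icc (-(r:ℤ)) (r:ℤ), (dRow r e i).card = 2*(r - i.natAbs)+1+e := by
      intro i hi
      simp only [Finset.mem_Icc] at hi
      rw [dRow, Finset.card_product, Finset.card_singleton, one_mul, Int.card_Icc]
      omega
    rw [Finset.sum_congr rfl hrow, Finset.sum_add_distrib, sumS, Finset.sum_const,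
      Int.card_Icc]
    have : ((r:ℤ) + 1 - -(r:ℤ)).toNat = 2*r+1 := by omega
    rw [this]
    ring
  · intro i _ j _ hij
    simp only [Finset.disjoint_left, dRow, Finset.mem_product, Finset.mem_singleton]
    rintro p ⟨h1, _⟩ ⟨h2, _⟩
    exact hij (h1 ▸ h2)

lemma pow_adj (k : ℕ) (u v : ℤ × ℤ) :
    (graphPow squareGrid k).Adj u v ↔ u ≠ v ∧ d1 u v ≤ k := by
  show u ≠ v ∧ squareGrid.dist u v ≤ k ↔ _
  rw [squareGrid_dist]

/-- The chromatic number of the `k`-th power of the square grid is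
`⌈(k+1)^2 / 2⌉` (Fertin, Godard, Raspaud). -/
theorem chromaticNumber_squareGrid_pow (k : ℕ) (hk : 1 ≤ k) :
    (graphPow squareGrid k).chromaticNumber = ((((k + 1) ^ 2 + 1) / 2 : ℕ) : ℕ∞) := by
  set n : ℕ := ((k + 1) ^ 2 + 1) / 2 with hn
  rcases Nat.even_or_odd k with ⟨r, hr⟩ | ⟨m', hm⟩
  · -- even case, k = 2r
    have hk2 : k = 2*r := by omega
    have hnval : n = 2*r^2+2*r+1 := by
      rw [hn, hk2]; ring_nf; omega
    apply le_antisymm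
    · -- coloring into ZMod n
      haveI : NeZero (2*r^2+2*r+1) := ⟨by omega⟩
      have C : (graphPow squareGrid k).Coloring (ZMod (2*r^2+2*r+1)) := by
        refine SimpleGraph.Coloring.mk
          (fun p => (((2*(r:ℤ)+1)*p.1 + p.2 : ℤ) : ZMod (2*r^2+2*r+1))) ?_
        intro u v hadj hEq
        rw [pow_adj] at hadj
        have hdvd : ((2*r^2+2*r+1 : ℕ) : ℤ) ∣
            ((2*(r:ℤ)+1)*(u.1-v.1) + (u.2-v.2)) := by
          rw [← ZMod.intCast_zmod_eq_zero_iff_dvd]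
          push_cast
          push_cast at hEq
          linear_combination hEq
        have hle : (u.1-v.1).natAbs + (u.2-v.2).natAbs ≤ 2*r := by
          have := hadj.2; rw [hk2] at this; exact this
        obtain ⟨h1, h2⟩ := packE r (u.1-v.1) (u.2-v.2) hdvd hle
        exact hadj.1 (Prod.ext (by omega) (by omega))
      have hcol : (graphPow squareGrid k).Colorable n := by
        have := C.colorable
        rwa [ZMod.card, ← hnval] at this
      exact hcol.chromaticNumber_le
    · -- clique of size n
      have hclique : (graphPow squareGrid k).IsClique (diamond r 0 : Finset (ℤ × ℤ)) := by
        intro p hp q hq hne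
        rw [Finset.mem_coe, mem_diamond] at hp hq
        rw [pow_adj]
        refine ⟨hne, ?_⟩
        rw [hk2]
        unfold d1
        omega
      have := hclique.card_le_chromaticNumber
      rwa [card_diamond, zero_mul, add_zero, ← hnval] at this
  · -- odd case, k = 2m-1 with m = m'+1
    set m : ℕ := m'+1 with hmdef
    have hk2 : k = 2*m - 1 := by omega
    have hm1 : 1 ≤ m := by omega
    have hnval : n = 2*m^2 := by
      rw [hn]; have : k + 1 = 2*m := by omega
      rw [this]; ring_nf; omega
    apply le_antisymm
    · haveI : NeZero (2*m) := ⟨by omega⟩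
      haveI : NeZero m := ⟨by omega⟩
      have C : (graphPow squareGrid k).Coloring (ZMod (2*m) × ZMod m) := by
        refine SimpleGraph.Coloring.mk
          (fun p => (((p.1 + p.2 : ℤ) : ZMod (2*m)), ((p.1 : ℤ) : ZMod m))) ?_
        intro u v hadj hEq
        rw [pow_adj] at hadj
        rw [Prod.ext_iff] at hEq
        obtain ⟨hE1, hE2⟩ := hEq
        have hd2 : ((2*m : ℕ) : ℤ) ∣ ((u.1-v.1) + (u.2-v.2)) := by
          rw [← ZMod.intCast_zmod_eq_zero_iff_dvd]
          push_cast
          push_cast at hE1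
          linear_combination hE1
        have hdm : ((m : ℕ) : ℤ) ∣ (u.1-v.1) := by
          rw [← ZMod.intCast_zmod_eq_zero_iff_dvd]
          push_cast
          push_cast at hE2
          linear_combination hE2
        have hle : (u.1-v.1).natAbs + (u.2-v.2).natAbs ≤ 2*m - 1 := by
          have := hadj.2; rw [hk2] at this; exact this
        obtain ⟨h1, h2⟩ := packO m hm1 (u.1-v.1) (u.2-v.2) hd2 hdm hle
        exact hadj.1 (Prod.ext (by omega) (by omega))
      have hcol : (graphPow squareGrid k).Colorable n := by
        have := C.colorable
        rwa [Fintype.card_prod, ZMod.card, ZMod.card,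
          show 2*m*m = 2*m^2 by ring, ← hnval] at this
      exact hcol.chromaticNumber_le
    · have hclique : (graphPow squareGrid k).IsClique (diamond (m-1) 1 : Finset (ℤ × ℤ)) := by
        intro p hp q hq hne
        rw [Finset.mem_coe, mem_diamond] at hp hq
        rw [pow_adj]
        refine ⟨hne, ?_⟩
        rw [hk2]
        unfold d1
        omega
      have := hclique.card_le_chromaticNumber
      have hcard : (diamond (m-1) 1).card = n := by
        rw [card_diamond, hnval]
        have : m - 1 + 1 = m := by omega
        nlinarith [this, sq_nonneg m]
      rwa [hcard] at this
end

section
/- Let G be one of the infinite square, triangular, or king grids, and let S ⊆ V(G) be a finite set such that G[S] is connected and hole-free. If p ∈ S is S-contractible, then G[S \ {p}] is connected and hole-free. -/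
/-- The infinite triangular grid. -/
def triGrid : SimpleGraph (ℤ × ℤ) where
  Adj u v := (u.1 - v.1).natAbs + (u.2 - v.2).natAbs = 1 ∨
    (u.1 - v.1 = 1 ∧ u.2 - v.2 = -1) ∨ (u.1 - v.1 = -1 ∧ u.2 - v.2 = 1)
  symm := ⟨by intro u v h; omega⟩
  loopless := ⟨by intro u h; omega⟩

/-- The infinite king grid. -/
def kingGrid : SimpleGraph (ℤ × ℤ) where
  Adj u v := max (u.1 - v.1).natAbs (u.2 - v.2).natAbs = 1
  symm := ⟨by intro u v h; omega⟩
  loopless := ⟨by intro u h; omega⟩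

/-- One of the three infinite grids: square, triangular or king. -/
inductive GridKind | square | tri | king

/-- The graph of a grid kind. -/
def GridKind.graph : GridKind → SimpleGraph (ℤ × ℤ)
  | .square => squareGrid
  | .tri => triGrid
  | .king => kingGrid

/-- The four diagonal corners of a vertex of the square grid. -/
def corners (p : ℤ × ℤ) : Set (ℤ × ℤ) :=
  {(p.1 + 1, p.2 + 1), (p.1 + 1, p.2 - 1), (p.1 - 1, p.2 + 1), (p.1 - 1, p.2 - 1)}

/-- The extended neighborhood `M_G(p)`: the neighborhood for the triangular and
king grids, and the neighborhood together with the four corners for the square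
grid. -/
def GridKind.M (g : GridKind) (p : ℤ × ℤ) : Set (ℤ × ℤ) :=
  match g with
  | .square => squareGrid.neighborSet p ∪ corners p
  | _ => g.graph.neighborSet p

/-- A hole of `S` in `G`: a finite nonempty connected set of vertices disjoint
from `S`, all of whose neighbors lie in the hole or in `S`. -/
def IsHole (G : SimpleGraph (ℤ × ℤ)) (S H : Set (ℤ × ℤ)) : Prop :=
  H.Finite ∧ H.Nonempty ∧ (G.induce H).Preconnected ∧ Disjoint H S ∧
    ∀ u ∈ H, ∀ v, G.Adj u v → v ∈ H ∪ S

/-- `S` is hole-free in `G` if it has no hole. -/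
def HoleFree (G : SimpleGraph (ℤ × ℤ)) (S : Set (ℤ × ℤ)) : Prop :=
  ∀ H, ¬ IsHole G S H

/-- A vertex `p ∈ S` is `S`-contractible if `G[M_G(p) ∩ S]` is connected and
some neighbor of `p` lies outside `S` (i.e. `|N_G(p) ∩ S| < Δ(G)`). -/
def Contractible (g : GridKind) (S : Set (ℤ × ℤ)) (p : ℤ × ℤ) : Prop :=
  (g.graph.induce (g.M p ∩ S)).Preconnected ∧ ∃ v, g.graph.Adj p v ∧ v ∉ S


open SimpleGraph

lemma reach_mono (G : SimpleGraph (ℤ×ℤ)) {A B : Set (ℤ×ℤ)} (hAB : A ⊆ B) {a b : ℤ×ℤ}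
    (ha : a ∈ A) (hb : b ∈ A) (h : (G.induce A).Reachable ⟨a,ha⟩ ⟨b,hb⟩) :
    (G.induce B).Reachable ⟨a, hAB ha⟩ ⟨b, hAB hb⟩ :=
  SimpleGraph.Reachable.map
    (⟨fun v => ⟨v.1, hAB v.2⟩, fun h => h⟩ : G.induce A →g G.induce B) h

/-- From a set satisfying all hole axioms except connectedness, extract a hole. -/
lemma hole_of_closed (G : SimpleGraph (ℤ×ℤ)) (S H : Set (ℤ×ℤ)) (hfin : H.Finite)
    (u0 : ℤ×ℤ) (hu0 : u0 ∈ H) (hdisj : Disjoint H S)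
    (hcl : ∀ u ∈ H, ∀ v, G.Adj u v → v ∈ H ∪ S) :
    ∃ C, IsHole G S C := by
  classical
  set C : Set (ℤ×ℤ) := {u | ∃ h : u ∈ H, (G.induce H).Reachable ⟨u0,hu0⟩ ⟨u,h⟩} with hC
  have hCH : C ⊆ H := fun u hu => hu.1
  have hu0C : u0 ∈ C := ⟨hu0, Reachable.refl _⟩
  have step : ∀ {a b : ↥H} (w : (G.induce H).Walk a b) (ha : (a : ℤ×ℤ) ∈ C),
      ∃ hb : (b : ℤ×ℤ) ∈ C, (G.induce C).Reachable ⟨a, ha⟩ ⟨b, hb⟩ := by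
    intro a b w
    induction w with
    | nil => intro ha; exact ⟨ha, Reachable.refl _⟩
    | cons h w ih =>
      rename_i x y z
      intro ha
      have hyC : (y : ℤ×ℤ) ∈ C := ⟨y.2, ha.2.trans (Adj.reachable h)⟩
      obtain ⟨hb, r⟩ := ih hyC
      refine ⟨hb, Reachable.trans (Adj.reachable ?_) r⟩
      exact (h : (G.induce C).Adj ⟨(x:ℤ×ℤ), ha⟩ ⟨(y:ℤ×ℤ), hyC⟩)
  refine ⟨C, hfin.subset hCH, ⟨u0, hu0C⟩, ?_, hdisj.mono_left hCH, ?_⟩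
  · rintro ⟨x, hx⟩ ⟨y, hy⟩
    obtain ⟨w⟩ := hx.2.symm.trans hy.2
    obtain ⟨hy', r⟩ := step w hx
    exact r
  · intro u hu v hadj
    rcases hcl u (hCH hu) v hadj with hv | hv
    · exact Or.inl ⟨hv, hu.2.trans
        (Adj.reachable (hadj : (G.induce H).Adj ⟨u, hCH hu⟩ ⟨v, hv⟩))⟩
    · exact Or.inr hv

/-- Walk surgery: reroute around `p` through `M ∩ S`. -/
lemma conn_aux (G : SimpleGraph (ℤ×ℤ)) (S M : Set (ℤ×ℤ)) (p : ℤ×ℤ)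
    (hMS : M ∩ S ⊆ S \ {p}) (hN : ∀ x, G.Adj p x → x ∈ M)
    (hMconn : (G.induce (M ∩ S)).Preconnected) :
    ∀ n (a b : ↥S) (w : (G.induce S).Walk a b), w.length ≤ n →
      ∀ (hap : (a:ℤ×ℤ) ≠ p) (hbp : (b:ℤ×ℤ) ≠ p),
      (G.induce (S \ {p})).Reachable ⟨a, ⟨a.2,hap⟩⟩ ⟨b, ⟨b.2,hbp⟩⟩ := by
  intro n
  induction n with
  | zero =>
    intro a b w hw hap hbp
    have hab : a = b := SimpleGraph.Walk.eq_of_length_eq_zero (Nat.le_zero.mp hw)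
    subst hab
    exact Reachable.refl _
  | succ n ih =>
    intro a b w hw hap hbp
    cases w with
    | nil => exact Reachable.refl _
    | cons h w' =>
      rename_i c
      by_cases hcp : (c : ℤ×ℤ) = p
      · cases w' with
        | nil => exact absurd hcp hbp
        | cons h2 w'' =>
          rename_i d
          have hpd : G.Adj p (d:ℤ×ℤ) := by rw [← hcp]; exact h2
          have hpa : G.Adj p (a:ℤ×ℤ) := by
            have : G.Adj (a:ℤ×ℤ) (c:ℤ×ℤ) := h
            rw [hcp] at this; exact this.symm
          have hdp : (d:ℤ×ℤ) ≠ p := fun e => G.irrefl (e ▸ hpd)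
          have haM : (a:ℤ×ℤ) ∈ M ∩ S := ⟨hN _ hpa, a.2⟩
          have hdM : (d:ℤ×ℤ) ∈ M ∩ S := ⟨hN _ hpd, d.2⟩
          have r1 := reach_mono G hMS haM hdM (hMconn ⟨a, haM⟩ ⟨d, hdM⟩)
          have hlen : w''.length ≤ n := by
            simp only [Walk.length_cons] at hw; omega
          exact r1.trans (ih d b w'' hlen hdp hbp)
      · have hlen : w'.length ≤ n := by
          simp only [Walk.length_cons] at hw; omega
        exact Reachable.trans
          (Adj.reachable (show (G.induce (S \ {p})).Adj ⟨a, ⟨a.2,hap⟩⟩ ⟨c, ⟨c.2,hcp⟩⟩ from h))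
          (ih c b w' hlen hcp hbp)

lemma not_mem_M (g : GridKind) (p : ℤ×ℤ) : p ∉ g.M p := by
  cases g with
  | square =>
    rintro (h | h)
    · exact squareGrid.irrefl h
    · simp only [corners, Set.mem_insert_iff, Set.mem_singleton_iff, Prod.ext_iff] at h
      omega
  | tri => exact fun h => triGrid.irrefl h
  | king => exact fun h => kingGrid.irrefl h

lemma adj_mem_M (g : GridKind) (p x : ℤ×ℤ) (h : g.graph.Adj p x) : x ∈ g.M p := by
  cases g with
  | square => exact Or.inl h
  | tri => exact h
  | king => exact h

/-- Removing an `S`-contractible vertex from a finite connected hole-free set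
keeps the induced subgraph connected and hole-free. -/
theorem contractible_remove_connected_holeFree (g : GridKind) (S : Set (ℤ × ℤ))
    (hfin : S.Finite) (hconn : (g.graph.induce S).Connected)
    (hhf : HoleFree g.graph S) (p : ℤ × ℤ) (hp : p ∈ S)
    (hc : Contractible g S p) :
    (g.graph.induce (S \ {p})).Preconnected ∧ HoleFree g.graph (S \ {p}) := by
  obtain ⟨hMconn, v0, hv0adj, hv0S⟩ := hc
  set G := g.graph with hG
  have hMS : g.M p ∩ S ⊆ S \ {p} := by
    rintro x ⟨hxM, hxS⟩
    exact ⟨hxS, fun e => not_mem_M g p (by rwa [e] at hxM)⟩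
  constructor
  · rintro ⟨x, hx⟩ ⟨y, hy⟩
    obtain ⟨w⟩ := hconn.preconnected ⟨x, hx.1⟩ ⟨y, hy.1⟩
    exact conn_aux G S (g.M p) p hMS (adj_mem_M g p) hMconn w.length _ _ w le_rfl hx.2 hy.2
  · intro H hH
    obtain ⟨hHfin, hHne, hHconn, hHdisj, hHcl⟩ := hH
    by_cases hpH : p ∈ H
    · have hv0H : v0 ∈ H := by
        rcases hHcl p hpH v0 hv0adj with hv | hv
        · exact hv
        · exact absurd hv.1 hv0S
      have hv0p : v0 ≠ p := fun e => G.irrefl (e ▸ hv0adj)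
      obtain ⟨C, hCh⟩ := hole_of_closed G S (H \ {p}) hHfin.diff v0 ⟨hv0H, hv0p⟩
        (by
          rw [Set.disjoint_left]
          rintro x ⟨hxH, hxp⟩ hxS
          exact Set.disjoint_left.mp hHdisj hxH ⟨hxS, hxp⟩)
        (by
          rintro u ⟨huH, hup⟩ w hadj
          rcases hHcl u huH w hadj with hw | hw
          · by_cases hwp : w = p
            · exact Or.inr (hwp ▸ hp)
            · exact Or.inl ⟨hw, hwp⟩
          · exact Or.inr hw.1)
      exact hhf C hCh
    · refine hhf H ⟨hHfin, hHne, hHconn, ?_, ?_⟩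
      · rw [Set.disjoint_left]
        intro x hxH hxS
        exact Set.disjoint_left.mp hHdisj hxH ⟨hxS, fun e => hpH (e ▸ hxH)⟩
      · intro u hu w hadj
        rcases hHcl u hu w hadj with hw | hw
        · exact Or.inl hw
        · exact Or.inr hw.1
end

section
/- In the triangular grid with vertex set Z×Z, for a vertex p, the induced subgraph on N(p) ∩ S is connected if and only if the set of port labels {a ∈ {0,...,5} : the neighbor of p in direction a is in S} is a (possibly empty or full) cyclic interval of Z/6Z. -/
/-- The offsets of the six neighbors of a vertex of the triangular grid, listed
in clockwise order as ports `0, …, 5`. -/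
def triDir : Fin 6 → ℤ × ℤ :=
  ![(-1, 0), (-1, 1), (0, 1), (1, 0), (1, -1), (0, -1)]

open Fin.NatCast in
/-- A set of port labels is a cyclic interval of `ℤ/6ℤ` (possibly empty or
full) if it consists of consecutive residues modulo 6. -/
def IsCyclicInterval (A : Set (Fin 6)) : Prop :=
  ∃ (s : Fin 6) (l : ℕ), l ≤ 6 ∧ A = {a | ∃ t : ℕ, t < l ∧ a = s + (t : Fin 6)}

@[simp] lemma td0 : triDir 0 = (-1, 0) := rfl
@[simp] lemma td1 : triDir 1 = (-1, 1) := rfl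
@[simp] lemma td2 : triDir 2 = (0, 1) := rfl
@[simp] lemma td3 : triDir 3 = (1, 0) := rfl
@[simp] lemma td4 : triDir 4 = (1, -1) := rfl
@[simp] lemma td5 : triDir 5 = (0, -1) := rfl

lemma adj_add (p : ℤ × ℤ) (a : Fin 6) : triGrid.Adj p (p + triDir a) := by
  fin_cases a <;> simp [triGrid, Prod.ext_iff]

lemma adj_exists {p v : ℤ × ℤ} (h : triGrid.Adj p v) : ∃ a : Fin 6, v = p + triDir a := by
  simp only [triGrid] at h
  have hd : (v.1 - p.1 = -1 ∧ v.2 - p.2 = 0) ∨ (v.1 - p.1 = -1 ∧ v.2 - p.2 = 1) ∨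
      (v.1 - p.1 = 0 ∧ v.2 - p.2 = 1) ∨ (v.1 - p.1 = 1 ∧ v.2 - p.2 = 0) ∨
      (v.1 - p.1 = 1 ∧ v.2 - p.2 = -1) ∨ (v.1 - p.1 = 0 ∧ v.2 - p.2 = -1) := by omega
  rcases hd with h|h|h|h|h|h
  exacts [⟨0, by apply Prod.ext <;> simp <;> omega⟩,
    ⟨1, by apply Prod.ext <;> simp <;> omega⟩,
    ⟨2, by apply Prod.ext <;> simp <;> omega⟩,
    ⟨3, by apply Prod.ext <;> simp <;> omega⟩,
    ⟨4, by apply Prod.ext <;> simp <;> omega⟩,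
    ⟨5, by apply Prod.ext <;> simp <;> omega⟩]

/-- The 6-cycle on port labels. -/
def C6 : SimpleGraph (Fin 6) where
  Adj a b := b = a + 1 ∨ a = b + 1
  symm := ⟨by intro a b h; tauto⟩
  loopless := ⟨by intro a; revert a; decide⟩

instance : DecidableRel C6.Adj := fun _ _ => inferInstanceAs (Decidable (_ ∨ _))

instance (A : Finset (Fin 6)) : DecidableRel (C6.induce (↑A : Set (Fin 6))).Adj :=
  fun _ _ => inferInstanceAs (Decidable (C6.Adj _ _))

lemma adj_iff (p : ℤ × ℤ) (a b : Fin 6) :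
    triGrid.Adj (p + triDir a) (p + triDir b) ↔ C6.Adj a b := by
  fin_cases a <;> fin_cases b <;>
    simp [triGrid, C6, Fin.ext_iff] <;> omega

lemma triDir_inj : Function.Injective triDir := by
  intro a b; revert a b; decide

/-- Decidable version of `IsCyclicInterval` on finsets. -/
def cyclicF (A : Finset (Fin 6)) : Prop :=
  ∃ s : Fin 6, ∃ l : Fin 7, ∀ a : Fin 6, a ∈ A ↔ ∃ t : Fin 6, t.1 < l.1 ∧ a = s + t

instance (A : Finset (Fin 6)) : Decidable (cyclicF A) := by unfold cyclicF; infer_instance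

set_option maxRecDepth 10000 in
lemma key : ∀ A : Finset (Fin 6), (C6.induce (↑A : Set (Fin 6))).Preconnected ↔ cyclicF A := by
  decide

open Fin.NatCast in
lemma natCast_fin6 (t : ℕ) (ht : t < 6) : ((t : Fin 6) : ℕ) = t := by
  simp [Fin.val_natCast, Nat.mod_eq_of_lt ht]

open Fin.NatCast in
lemma cyclic_iff (A : Finset (Fin 6)) : IsCyclicInterval (↑A : Set (Fin 6)) ↔ cyclicF A := by
  constructor
  · rintro ⟨s, l, hl, hA⟩
    refine ⟨s, ⟨l, by omega⟩, fun a => ?_⟩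
    rw [← Finset.mem_coe, hA]
    constructor
    · rintro ⟨t, ht, rfl⟩
      refine ⟨⟨t, by omega⟩, by simpa using ht, ?_⟩
      congr 1
      exact Fin.ext (natCast_fin6 t (by omega))
    · rintro ⟨t, ht, rfl⟩
      refine ⟨t.1, by simpa using ht, ?_⟩
      congr 1
      exact (Fin.cast_val_eq_self t).symm
  · rintro ⟨s, l, h⟩
    refine ⟨s, l.1, by omega, Set.ext fun a => ?_⟩
    rw [Finset.mem_coe, h a]
    constructor
    · rintro ⟨t, ht, rfl⟩
      exact ⟨t.1, ht, by rw [Fin.cast_val_eq_self]⟩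
    · rintro ⟨t, ht, rfl⟩
      have ht6 : t < 6 := by omega
      exact ⟨⟨t, ht6⟩, by simpa [natCast_fin6 t ht6] using ht,
        by congr 1; exact Fin.ext (natCast_fin6 t ht6)⟩

/-- For a vertex `p` of the triangular grid and a set `S` of vertices, the
subgraph induced on `N(p) ∩ S` is connected iff the set of ports of `p` leading
into `S` is a cyclic interval of `ℤ/6ℤ`. -/
theorem triGrid_neighborhood_connected_iff_cyclic_interval
    (p : ℤ × ℤ) (S : Set (ℤ × ℤ)) :
    (triGrid.induce (triGrid.neighborSet p ∩ S)).Preconnected ↔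
      IsCyclicInterval {a : Fin 6 | p + triDir a ∈ S} := by
  classical
  set A : Finset (Fin 6) := Finset.univ.filter (fun a => p + triDir a ∈ S) with hA
  have hAset : {a : Fin 6 | p + triDir a ∈ S} = ↑A := by
    ext a; simp [hA]
  have f : ∀ a : {x : Fin 6 // x ∈ (↑A : Set (Fin 6))},
      p + triDir a.1 ∈ triGrid.neighborSet p ∩ S := by
    rintro ⟨a, ha⟩
    exact ⟨adj_add p a, by simpa [hA] using ha⟩
  let e : C6.induce (↑A : Set (Fin 6)) ≃g triGrid.induce (triGrid.neighborSet p ∩ S) := by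
    refine ⟨Equiv.ofBijective (fun a => ⟨p + triDir a.1, f a⟩) ⟨?_, ?_⟩, ?_⟩
    · rintro ⟨a, ha⟩ ⟨b, hb⟩ hab
      simp only [Subtype.mk.injEq, add_right_injective] at hab
      exact Subtype.ext (triDir_inj (by exact add_left_cancel hab))
    · rintro ⟨v, hv1, hv2⟩
      obtain ⟨a, rfl⟩ := adj_exists hv1
      exact ⟨⟨a, by simpa [hA] using hv2⟩, rfl⟩
    · rintro ⟨a, ha⟩ ⟨b, hb⟩
      simpa using adj_iff p a b
  rw [hAset, ← e.preconnected_iff, key A, cyclic_iff]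
end
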